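/- Let U be a finite group with normal abelian subgroup A containing U', G = U/A. Every 1-cocycle f ∈ Z^1(U, A) (for the conjugation action of U on A) gives rise to an endomorphism γ of U defined by γ(x) = f(x)·x, and the subgroup A_γ = U^{γ−1}·U' is the preimage in A of the image of the homomorphism φ : U/U' → A/U' induced by f; moreover (A : A_γ) = (A/U' : Im φ). -/

import Mathlib

/-- Let `U` be a finite group and `A` a normal abelian subgroup containing `U'`, with
`U` acting on `A` by conjugation. Every 1-cocycle `f ∈ Z¹(U, A)` gives rise to an
endomorphism `γ : x ↦ f(x)·x` of `U`; the subgroup `A_γ = U^{γ−1}·U'` is the preimage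
in `A` of the image of the homomorphism `φ : U/U' → A/U'` induced by `f`, and
`(A : A_γ) = (A/U' : Im φ)`. -/
theorem cocycle_gives_endomorphism
    (U : Type*) [Group U] [Finite U]
    (A : Subgroup U) [A.Normal]
    (hab : ∀ a b : ↥A, a * b = b * a)
    (hUA : commutator U ≤ A)
    (f : U → U) (hfA : ∀ x : U, f x ∈ A)
    (hcocycle : ∀ x y : U, f (x * y) = f x * (x * f y * x⁻¹)) :
    (∀ x y : U, f (x * y) * (x * y) = (f x * x) * (f y * y)) ∧
    ∀ φ : (U ⧸ commutator U) →* (U ⧸ commutator U),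
      (∀ x : U, φ (QuotientGroup.mk x) = QuotientGroup.mk (f x)) →
      (Subgroup.closure {z : U | ∃ x : U, z = (f x * x) * x⁻¹} ⊔ commutator U =
        Subgroup.comap (QuotientGroup.mk' (commutator U)) φ.range ⊓ A) ∧
      Subgroup.relIndex
          (Subgroup.closure {z : U | ∃ x : U, z = (f x * x) * x⁻¹} ⊔ commutator U) A =
        Subgroup.relIndex φ.range (A.map (QuotientGroup.mk' (commutator U))) := by
  refine ⟨fun x y => by rw [hcocycle]; group, fun φ hφ => ?_⟩
  have heq : Subgroup.closure {z : U | ∃ x : U, z = (f x * x) * x⁻¹} ⊔ commutator U =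
      Subgroup.comap (QuotientGroup.mk' (commutator U)) φ.range ⊓ A := by
    apply le_antisymm
    · apply sup_le
      · rw [Subgroup.closure_le]
        rintro z ⟨x, rfl⟩
        have hz : f x * x * x⁻¹ = f x := mul_inv_cancel_right _ _
        rw [hz]
        refine ⟨⟨QuotientGroup.mk x, ?_⟩, hfA x⟩
        simpa using hφ x
      · intro c hc
        refine ⟨⟨1, ?_⟩, hUA hc⟩
        simp only [map_one, QuotientGroup.mk'_apply]
        exact ((QuotientGroup.eq_one_iff c).mpr hc).symm
    · rintro u ⟨⟨q, hq⟩, huA⟩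
      obtain ⟨x, rfl⟩ := QuotientGroup.mk_surjective q
      rw [hφ x] at hq
      have hmem : (f x)⁻¹ * u ∈ commutator U := by
        rw [← QuotientGroup.eq]
        simpa using hq
      have : u = f x * ((f x)⁻¹ * u) := by group
      rw [this]
      exact mul_mem
        (Subgroup.mem_sup_left (Subgroup.subset_closure
          ⟨x, by rw [mul_inv_cancel_right]⟩))
        (Subgroup.mem_sup_right hmem)
  refine ⟨heq, ?_⟩
  rw [heq, Subgroup.inf_relIndex_right, Subgroup.relIndex_comap]
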